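/- arXiv:0903.1756 — 2 statements merged into one kernel-verified Lean document; each statement's English description precedes it below -/
import Mathlib

section
/- The following hold: (a) max_{0 ≤ i ≤ I} γ(i) → 0 as n → ∞; (b) there exists a constant c > 0 such that for all sufficiently large n and all 0 ≤ i ≤ I, γ(i) ≥ c·n^{-5ε}; (c) for all sufficiently large n and all 0 ≤ i ≤ I, n^{-30ε} ≤ Γ(i) ≤ n^{-10ε}. -/
open MeasureTheory Finset Filter

namespace TF

noncomputable section
open scoped Classical

/-- Edges of the complete graph on `Fin n` are elements of `Sym2 (Fin n)`. -/
abbrev Edge (n : ℕ) := Sym2 (Fin n)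

/-- The edge set of the complete graph `K_n` (non-diagonal pairs). -/
def allEdges (n : ℕ) : Finset (Edge n) := Finset.univ.filter (fun e => ¬ e.IsDiag)

/-- Three edges form a triangle. -/
def IsTri {n : ℕ} (e f g : Edge n) : Prop :=
  ∃ a b c : Fin n, a ≠ b ∧ b ≠ c ∧ a ≠ c ∧ e = s(a, b) ∧ f = s(b, c) ∧ g = s(a, c)

/-- An edge set is triangle-free. -/
def TriFree {n : ℕ} (T : Finset (Edge n)) : Prop :=
  ∀ e ∈ T, ∀ f ∈ T, ∀ g ∈ T, ¬ IsTri e f g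

/-- Adding `e` to `T` does not create a triangle. -/
def AddOK {n : ℕ} (T : Finset (Edge n)) (e : Edge n) : Prop :=
  ∀ f ∈ T, ∀ g ∈ T, ¬ IsTri e f g

/-- Traverse a list of edges, adding each to the current graph unless
its addition creates a triangle (or it is a loop). -/
def greedy {n : ℕ} (T : Finset (Edge n)) : List (Edge n) → Finset (Edge n)
  | [] => T
  | e :: l => if AddOK T e ∧ ¬ e.IsDiag then greedy (insert e T) l else greedy T l

/-- The edges of `s`, listed in increasing order of birthtime. -/
def sortByBirth {n : ℕ} (β : Edge n → ℝ) (s : Finset (Edge n)) : List (Edge n) :=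
  s.toList.mergeSort (fun a b => β a ≤ β b)

/-- `δ := 1/⌊n^ε⌋`. -/
def del (n : ℕ) (ε : ℝ) : ℝ := 1 / (⌊(n : ℝ) ^ ε⌋₊ : ℝ)

/-- `I := δ^{-2} = ⌊n^ε⌋²`. -/
def Inat (n : ℕ) (ε : ℝ) : ℕ := (⌊(n : ℝ) ^ ε⌋₊) ^ 2

/-- `M := n^{20000ε}`. -/
def Mc (n : ℕ) (ε : ℝ) : ℝ := (n : ℝ) ^ (20000 * ε)

/-- The imaginary error function `erfi(x) = (2/√π)∫₀ˣ exp(t²) dt`. -/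
def erfi (x : ℝ) : ℝ := (2 / Real.sqrt Real.pi) * ∫ t in (0:ℝ)..x, Real.exp (t ^ 2)

/-- `Φ` is the inverse function of `y ↦ (√π/2)·erfi y`; equivalently it is the
solution of `Φ(0) = 0`, `Φ'(x) = exp (-Φ(x)²)`. -/
def Phi : ℝ → ℝ := Function.invFun (fun y : ℝ => (Real.sqrt Real.pi / 2) * erfi y)

/-- `φ(x) := exp (-Φ(x)²)`, the derivative of `Φ`. -/
def phi (x : ℝ) : ℝ := Real.exp (-(Phi x) ^ 2)

/-- `m := ⌊n^{100ε}⌋·φ(iδ)⁻¹`. -/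
def mc (n : ℕ) (ε : ℝ) (i : ℕ) : ℝ := (⌊(n : ℝ) ^ (100 * ε)⌋₊ : ℝ) * (phi (i * del n ε))⁻¹

/-- `γ(i) := max{δΦ(iδ)φ(iδ), δ²φ(iδ)²}`. -/
def gam (n : ℕ) (ε : ℝ) (i : ℕ) : ℝ :=
  max (del n ε * Phi (i * del n ε) * phi (i * del n ε))
      (del n ε ^ 2 * phi (i * del n ε) ^ 2)

/-- `Γ(0) := n^{-30ε}`, `Γ(i) := Γ(i-1)(1 + 10γ(i-1))`. -/
def Gam (n : ℕ) (ε : ℝ) : ℕ → ℝ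
  | 0 => (n : ℝ) ^ (-30 * ε)
  | i + 1 => Gam n ε i * (1 + 10 * gam n ε i)

/-- `x = a(1 ± b)`, i.e. `a(1-b) ≤ x ≤ a(1+b)`. -/
def within (x a b : ℝ) : Prop := a * (1 - b) ≤ x ∧ x ≤ a * (1 + b)

/-- The uniform probability measure on a set of reals. -/
def unif (s : Set ℝ) : Measure ℝ := (volume s)⁻¹ • volume.restrict s

/-- The product measure under which every edge of `K_n` receives an
independent uniform birthtime in `[0,1]`. -/
def stepMeasure (n : ℕ) : Measure (Edge n → ℝ) :=
  Measure.pi fun _ => unif (Set.Icc 0 1)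

/-- `Λ₀(g,i)`: pairs `{g₁,g₂} ⊆ TF_i` forming a triangle with `g`. -/
def Lam0 {n : ℕ} (TFi : Finset (Edge n)) (g : Edge n) : Finset (Finset (Edge n)) :=
  (TFi.powersetCard 2).filter
    (fun P => ∃ g1 ∈ P, ∃ g2 ∈ P, g1 ≠ g2 ∧ IsTri g g1 g2)

/-- `Λ₁(g,i)`: singletons (identified with edges) `g₁ ∉ B_{≤i}` such that some
`g₂ ∈ TF_i` makes `{g,g₁,g₂}` a triangle and `TF_i ∪ {g₁}` is triangle-free. -/
def Lam1 {n : ℕ} (TFi Bprev : Finset (Edge n)) (g : Edge n) : Finset (Edge n) :=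
  (allEdges n \ Bprev).filter
    (fun g1 => (∃ g2 ∈ TFi, IsTri g g1 g2) ∧ TriFree (insert g1 TFi))

/-- `Λ₂(g,i)`: pairs `{g₁,g₂} ⊆ K_n ∖ B_{≤i}` forming a triangle with `g`
such that `TF_i ∪ {g_j}` is triangle-free for both `j ∈ {1,2}`. -/
def Lam2 {n : ℕ} (TFi Bprev : Finset (Edge n)) (g : Edge n) : Finset (Finset (Edge n)) :=
  ((allEdges n \ Bprev).powersetCard 2).filter
    (fun P => (∃ g1 ∈ P, ∃ g2 ∈ P, g1 ≠ g2 ∧ IsTri g g1 g2) ∧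
      ∀ f ∈ P, TriFree (insert f TFi))

/-- The process is well-behaved at step `i` (the precondition of the
key lemma), for a given instance `(TF_i, B_{≤i})`. -/
def WellBehaved (n : ℕ) (ε : ℝ) (i : ℕ) (TFi Bprev : Finset (Edge n)) : Prop :=
  (∀ g ∈ allEdges n, ((Lam0 TFi g).card : ℝ) ≤ i * (n : ℝ) ^ (5 * ε) ∧
      ((Lam1 TFi Bprev g).card : ℝ) ≤ i * Real.sqrt n) ∧
  (∀ g ∈ allEdges n \ Bprev,
    within ((Lam1 TFi Bprev g).card : ℝ)
      (2 * Real.sqrt n * Phi (i * del n ε) * phi (i * del n ε)) (Gam n ε i) ∧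
    within ((Lam2 TFi Bprev g).card : ℝ)
      ((n : ℝ) * phi (i * del n ε) ^ 2) (Gam n ε i))

/-- Structural properties of any instance of the state `(TF_i, B_{≤i})` of the
process: `TF_i ⊆ B_{≤i} ⊆ K_n` and `TF_i` is triangle-free. -/
def Instance (n : ℕ) (TFi Bprev : Finset (Edge n)) : Prop :=
  TFi ⊆ Bprev ∧ Bprev ⊆ allEdges n ∧ TriFree TFi

/-- The set `B_{i+1}` determined by the fresh birthtimes `β = β_{i+1}`. -/
def Bnext (n : ℕ) (ε : ℝ) (Bprev : Finset (Edge n)) (β : Edge n → ℝ) : Finset (Edge n) :=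
  (allEdges n \ Bprev).filter (fun f => β f < del n ε * (n : ℝ) ^ (-(1:ℝ)/2))

/-- The graph `TF_{i+1}`, obtained by traversing the edges of `B_{i+1}` in
increasing order of birthtime, adding each unless a triangle is created. -/
def TFnext (n : ℕ) (ε : ℝ) (TFi Bprev : Finset (Edge n)) (β : Edge n → ℝ) : Finset (Edge n) :=
  greedy TFi (sortByBirth β (Bnext n ε Bprev β))

/-- `B^⋆_{i+1}` as a function of the birthtimes: the edges outside `B_{≤i}`
with birthtime below `M·n^{-1/2}`. -/
def BstarOf (n : ℕ) (ε : ℝ) (Bprev : Finset (Edge n)) (β : Edge n → ℝ) : Finset (Edge n) :=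
  (allEdges n \ Bprev).filter (fun f => β f < Mc n ε * (n : ℝ) ^ (-(1:ℝ)/2))

/-- `B^*_{i+1}` as a function of the birthtimes: the edges outside `B_{≤i}`
with birthtime below `m·n^{-1/2}`. -/
def BsubOf (n : ℕ) (ε : ℝ) (i : ℕ) (Bprev : Finset (Edge n)) (β : Edge n → ℝ) : Finset (Edge n) :=
  (allEdges n \ Bprev).filter (fun f => β f < mc n ε i * (n : ℝ) ^ (-(1:ℝ)/2))

/-- `Λ^⋆₁`-type family: members of `Λ₁` contained in the selected edge set. -/
def LamS1 {n : ℕ} (TFi Bprev Bsel : Finset (Edge n)) (g : Edge n) : Finset (Edge n) :=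
  (Lam1 TFi Bprev g).filter (fun e => e ∈ Bsel)

/-- `Λ^⋆₂`-type family: members of `Λ₂` contained in the selected edge set. -/
def LamS2 {n : ℕ} (TFi Bprev Bsel : Finset (Edge n)) (g : Edge n) : Finset (Finset (Edge n)) :=
  (Lam2 TFi Bprev g).filter (fun P => P ⊆ Bsel)

/-- `Λ^{⋆⋆}₂`: members of `Λ₂` meeting the selected edge set in one edge. -/
def LamSS2 {n : ℕ} (TFi Bprev Bsel : Finset (Edge n)) (g : Edge n) : Finset (Finset (Edge n)) :=
  (Lam2 TFi Bprev g).filter (fun P => (P ∩ Bsel).card = 1)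

/-- The event `E^⋆(h)`: properties P1–P4. -/
def Estar (n : ℕ) (ε : ℝ) (i : ℕ) (TFi Bprev Bstar : Finset (Edge n)) (h : ℝ) : Prop :=
  (∀ g ∈ allEdges n \ Bprev,
    within ((LamS1 TFi Bprev Bstar g).card : ℝ)
      (2 * Mc n ε * Phi (i * del n ε) * phi (i * del n ε))
      (Gam n ε i + h * Gam n ε i * gam n ε i) ∧
    within ((LamS2 TFi Bprev Bstar g).card : ℝ)
      (Mc n ε ^ 2 * phi (i * del n ε) ^ 2)
      (Gam n ε i + h * Gam n ε i * gam n ε i) ∧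
    within ((LamSS2 TFi Bprev Bstar g).card : ℝ)
      (2 * Mc n ε * Real.sqrt n * phi (i * del n ε) ^ 2)
      (Gam n ε i + h * Gam n ε i * gam n ε i)) ∧
  (∀ w x y : Fin n, w ≠ x → x ≠ y → w ≠ y →
    s(w, x) ∉ Bprev → s(x, y) ∉ Bprev →
    (((Finset.univ.filter (fun z : Fin n => z ≠ w ∧ z ≠ x ∧ z ≠ y ∧
        s(w, z) ∈ TFi ∧ s(y, z) ∈ TFi ∧ s(x, z) ∈ Bstar)).card : ℝ) ≤ Real.log n ^ 2 ∧
     ((Finset.univ.filter (fun z : Fin n => z ≠ w ∧ z ≠ x ∧ z ≠ y ∧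
        s(w, z) ∈ TFi ∧ s(x, z) ∈ Bstar ∧ s(y, z) ∈ Bstar)).card : ℝ) ≤ Real.log n ^ 2 ∧
     ((Finset.univ.filter (fun z : Fin n => z ≠ w ∧ z ≠ x ∧ z ≠ y ∧
        s(w, z) ∈ TFi ∧ s(x, z) ∉ Bprev ∧ s(y, z) ∈ Bstar)).card : ℝ) ≤ Mc n ε ^ 2)) ∧
  (∀ x y : Fin n, x ≠ y →
    ((Finset.univ.filter (fun z : Fin n => z ≠ x ∧ z ≠ y ∧
        s(x, z) ∈ Bstar ∧ s(y, z) ∈ Bstar)).card : ℝ) ≤ 2 * Mc n ε ^ 2) ∧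
  (∀ x : Fin n,
    ((Finset.univ.filter (fun y : Fin n => y ≠ x ∧ s(x, y) ∈ Bstar)).card : ℝ)
      ≤ 2 * Mc n ε * Real.sqrt n)

/-- The children (labeled by sets of edges) of a tree node labeled `g` whose
grandparent is labeled `prev`, in the tree built from the selected edge set
`Bsel` (`Bsel = B^⋆_{i+1}` gives `T^⋆`, `Bsel = B^*_{i+1}` gives `T^*`). -/
def childSets {n : ℕ} (TFi Bprev Bsel : Finset (Edge n)) (g : Edge n) :
    Option (Edge n) → Finset (Finset (Edge n))
  | none => (LamS1 TFi Bprev Bsel g).image (fun e => {e}) ∪ LamS2 TFi Bprev Bsel g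
  | some g' => ((LamS2 TFi Bprev Bsel g).filter (fun G => g' ∉ G)) ∪
      ((LamS1 TFi Bprev Bsel g).filter
        (fun e => e ≠ g' ∧ ¬ IsTri e g g')).image (fun e => {e})

/-- Survival of a tree node labeled `g` with grandparent label `prev`, when
the birthtime of the node's label is `b` and `l` further generations follow:
a non-leaf node survives iff for every child `G` all of whose edges have
birthtime below `min{b, δn^{-1/2}}`, some child of `G` does not survive. -/
def surv (n : ℕ) (ε : ℝ) (TFi Bprev Bsel : Finset (Edge n)) (β : Edge n → ℝ) :
    ℕ → Edge n → Option (Edge n) → ℝ → Prop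
  | 0, _, _, _ => True
  | l + 1, g, prev, b => ∀ G ∈ childSets TFi Bprev Bsel g prev,
      (∀ f ∈ G, β f < min b (del n ε * (n : ℝ) ^ (-(1:ℝ)/2))) →
      ∃ f ∈ G, ¬ surv n ε TFi Bprev Bsel β l f (some g) (β f)

/-- The event `A_{g,l}`: the root of `T_{g,l}` survives. -/
def Aev (n : ℕ) (ε : ℝ) (TFi Bprev Bsel : Finset (Edge n)) (β : Edge n → ℝ)
    (l : ℕ) (g : Edge n) : Prop :=
  surv n ε TFi Bprev Bsel β l g none (β g)

/-- The event `A_{F,l} := ∩_{f ∈ F} A_{f,l}`. -/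
def AevF (n : ℕ) (ε : ℝ) (TFi Bprev Bsel : Finset (Edge n)) (β : Edge n → ℝ)
    (l : ℕ) (F : Finset (Edge n)) : Prop :=
  ∀ f ∈ F, Aev n ε TFi Bprev Bsel β l f

/-- The conditional distribution of the birthtimes `β_{i+1}` given that
`B^⋆_{i+1} = Bstar` was chosen, that the edges of `F1` fall in `B_{i+1}`,
and that the edges of `Fex` do not fall in `B_{i+1}`. -/
def condM (n : ℕ) (ε : ℝ) (Bprev Bstar F1 Fex : Finset (Edge n)) : Measure (Edge n → ℝ) :=
  Measure.pi fun e =>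
    if e ∈ F1 then unif (Set.Ico 0 (del n ε * (n : ℝ) ^ (-(1:ℝ)/2)))
    else if e ∈ Fex then
      (if e ∈ Bstar then
          unif (Set.Ico (del n ε * (n : ℝ) ^ (-(1:ℝ)/2)) (Mc n ε * (n : ℝ) ^ (-(1:ℝ)/2)))
        else unif (Set.Ioc (Mc n ε * (n : ℝ) ^ (-(1:ℝ)/2)) 1))
    else if e ∈ Bstar then unif (Set.Ico 0 (Mc n ε * (n : ℝ) ^ (-(1:ℝ)/2)))
    else if e ∈ Bprev then unif (Set.Icc 0 1)
    else unif (Set.Ioc (Mc n ε * (n : ℝ) ^ (-(1:ℝ)/2)) 1)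

/-- As `condM`, but additionally given that `B^*_{i+1} = Bsub` was chosen. -/
def condM2 (n : ℕ) (ε : ℝ) (i : ℕ) (Bprev Bstar Bsub F1 Fex : Finset (Edge n)) :
    Measure (Edge n → ℝ) :=
  Measure.pi fun e =>
    if e ∈ F1 then unif (Set.Ico 0 (del n ε * (n : ℝ) ^ (-(1:ℝ)/2)))
    else if e ∈ Fex then
      (if e ∈ Bsub then
          unif (Set.Ico (del n ε * (n : ℝ) ^ (-(1:ℝ)/2)) (mc n ε i * (n : ℝ) ^ (-(1:ℝ)/2)))
        else if e ∈ Bstar then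
          unif (Set.Ico (mc n ε i * (n : ℝ) ^ (-(1:ℝ)/2)) (Mc n ε * (n : ℝ) ^ (-(1:ℝ)/2)))
        else unif (Set.Ioc (Mc n ε * (n : ℝ) ^ (-(1:ℝ)/2)) 1))
    else if e ∈ Bsub then unif (Set.Ico 0 (mc n ε i * (n : ℝ) ^ (-(1:ℝ)/2)))
    else if e ∈ Bstar then
      unif (Set.Ico (mc n ε i * (n : ℝ) ^ (-(1:ℝ)/2)) (Mc n ε * (n : ℝ) ^ (-(1:ℝ)/2)))
    else if e ∈ Bprev then unif (Set.Icc 0 1)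
    else unif (Set.Ioc (Mc n ε * (n : ℝ) ^ (-(1:ℝ)/2)) 1)

/-- A descending path of labels from a (root) node labeled `g` whose
grandparent label is `prev`: each step records the label of a set-node
together with the label of one of its edge-children. -/
def chain {n : ℕ} (TFi Bprev Bsel : Finset (Edge n)) :
    Edge n → Option (Edge n) → List (Finset (Edge n) × Edge n) → Prop
  | _, _, [] => True
  | g, prev, (G, g') :: rest =>
      G ∈ childSets TFi Bprev Bsel g prev ∧ g' ∈ G ∧ chain TFi Bprev Bsel g' (some g) rest

/-- The (edge) label of the node-at-even-distance reached by a path. -/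
def lbl {n : ℕ} (f : Edge n) (path : List (Finset (Edge n) × Edge n)) : Edge n :=
  (path.map Prod.snd).getLastD f

/-- The label of the grandparent of the node reached by a path. -/
def prevLbl {n : ℕ} (f : Edge n) (path : List (Finset (Edge n) × Edge n)) : Option (Edge n) :=
  if path.isEmpty then none else some (lbl f path.dropLast)

/-- The event `E^*_F`: an edge labeling a node at even distance from the root
of a tree of `T^*_{F,L}` labels no other such node. -/
def EstarF (n : ℕ) (TFi Bprev Bsub : Finset (Edge n)) (L : ℕ) (F : Finset (Edge n)) : Prop :=
  ∀ f ∈ F, ∀ f' ∈ F, ∀ path path' : List (Finset (Edge n) × Edge n),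
    chain TFi Bprev Bsub f none path → chain TFi Bprev Bsub f' none path' →
    path.length ≤ L → path'.length ≤ L →
    lbl f path = lbl f' path' → f = f' ∧ path = path'

/-- The event `E^*`. -/
def EstarSub (n : ℕ) (ε : ℝ) (i : ℕ) (TFi Bprev Bsub : Finset (Edge n)) : Prop :=
  ∀ g ∈ allEdges n \ Bprev,
    within ((LamS1 TFi Bprev Bsub g).card : ℝ)
      (2 * mc n ε i * Phi (i * del n ε) * phi (i * del n ε)) (1.01 * Gam n ε i) ∧
    within ((LamS2 TFi Bprev Bsub g).card : ℝ)
      (mc n ε i ^ 2 * phi (i * del n ε) ^ 2) (1.01 * Gam n ε i)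

/-- The iterates `p_l` of the limiting survival recursion (with `c1 = φ(iδ)`
and `c2 = Φ(iδ)`): `p₀ ≡ 1` and
`p_{l+1}(x) = exp(-P_l(x)²c₁² - 2P_l(x)c₂c₁)` where `P_l(x) := ∫₀ˣ p_l`. -/
def plim (c1 c2 : ℝ) : ℕ → ℝ → ℝ
  | 0 => fun _ => 1
  | l + 1 => fun x =>
      Real.exp (-(∫ y in (0:ℝ)..x, plim c1 c2 l y) ^ 2 * c1 ^ 2 -
        2 * (∫ y in (0:ℝ)..x, plim c1 c2 l y) * c2 * c1)

/-- The staged triangle-free process: `stage i = (TF_i, B_{≤i})`. -/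
def stage (n : ℕ) (ε : ℝ) (β : ℕ → Edge n → ℝ) : ℕ → Finset (Edge n) × Finset (Edge n)
  | 0 => (∅, ∅)
  | i + 1 =>
      let p := stage n ε β i
      (TFnext n ε p.1 p.2 (β (i + 1)), p.2 ∪ Bnext n ε p.2 (β (i + 1)))

/-- The sample space for the stages `0,…,I` of the process: independent
uniform birthtimes in `[0,1]` for every stage and every edge. -/
def stagesMeasure (n : ℕ) (ε : ℝ) : Measure (Fin (Inat n ε + 1) → Edge n → ℝ) :=
  Measure.pi fun _ => stepMeasure n

/-- Extend a finitely-indexed family of birthtimes to all stages. -/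
def extendB (n : ℕ) (ε : ℝ) (ω : Fin (Inat n ε + 1) → Edge n → ℝ) : ℕ → Edge n → ℝ :=
  fun k => if h : k < Inat n ε + 1 then ω ⟨k, h⟩ else fun _ => 0

/-- `TF_I` as a function of the birthtimes. -/
def TFI (n : ℕ) (ε : ℝ) (ω : Fin (Inat n ε + 1) → Edge n → ℝ) : Finset (Edge n) :=
  (stage n ε (extendB n ε ω) (Inat n ε)).1

/-- The final graph `TF(n)` of the (one-shot) triangle-free process. -/
def TFone (n : ℕ) (β : Edge n → ℝ) : Finset (Edge n) :=
  greedy ∅ (sortByBirth β (allEdges n))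

/-- `TF(n,p) := TF(n) ∩ {f : β(f) ≤ p}`. -/
def TFnp (n : ℕ) (β : Edge n → ℝ) (p : ℝ) : Finset (Edge n) :=
  (TFone n β).filter (fun f => β f ≤ p)

/-- `Fn` is a copy of the graph `F` inside `K_n`. -/
def IsCopy {V : Type*} (F : SimpleGraph V) {n : ℕ} (Fn : Finset (Edge n)) : Prop :=
  ∃ φ : V → Fin n, Function.Injective φ ∧
    (∀ e, e ∈ Fn ↔ ∃ a b, F.Adj a b ∧ e = s(φ a, φ b))

/-- The number of copies of `F` in the graph on `Fin n` with edge set `T`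
(= #{injective adjacency-preserving maps} / #{automorphisms of F}). -/
def numCopies {V : Type*} [Fintype V] (F : SimpleGraph V) {n : ℕ} (T : Finset (Edge n)) : ℝ :=
  (Nat.card {φ : V → Fin n // Function.Injective φ ∧
      ∀ a b, F.Adj a b → s(φ a, φ b) ∈ T} : ℝ) / (Nat.card (F ≃g F) : ℝ)

/-- The number of edges `e_F` of a graph `F`. -/
def eCard {V : Type*} (F : SimpleGraph V) : ℕ := Nat.card F.edgeSet

/-- `F` is balanced: `e_F/v_F ≥ e_H/v_H` for every subgraph `H ⊆ F`
with at least one vertex. -/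
def Balanced {V : Type*} [Fintype V] (F : SimpleGraph V) : Prop :=
  ∀ H : F.Subgraph, H.verts.Nonempty →
    (Nat.card H.edgeSet : ℝ) / (Nat.card H.verts : ℝ) ≤
      (eCard F : ℝ) / (Fintype.card V : ℝ)

end

end TF

namespace TF
noncomputable section
open scoped Classical
open intervalIntegral

/-! ### Auxiliary facts about `Phi` -/

private def auxFi (y : ℝ) : ℝ := ∫ t in (0:ℝ)..y, Real.exp (t ^ 2)

private lemma aux_contExpSq : Continuous (fun t : ℝ => Real.exp (t ^ 2)) :=
  Real.continuous_exp.comp (continuous_pow 2)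

private lemma aux_intInt (a b : ℝ) :
    IntervalIntegrable (fun t : ℝ => Real.exp (t ^ 2)) volume a b :=
  aux_contExpSq.intervalIntegrable a b

private lemma auxFi_sub (a b : ℝ) : auxFi b - auxFi a = ∫ t in a..b, Real.exp (t ^ 2) := by
  have h := integral_add_adjacent_intervals (aux_intInt 0 a) (aux_intInt a b)
  simp only [auxFi]; linarith

private lemma auxFi_strictMono : StrictMono auxFi := by
  intro a b hab
  have h := auxFi_sub a b
  have hpos : 0 < ∫ t in a..b, Real.exp (t ^ 2) :=
    intervalIntegral_pos_of_pos (aux_intInt a b) (fun x => Real.exp_pos _) hab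
  linarith

private lemma auxFi_ge_self {y : ℝ} (hy : 0 ≤ y) : y ≤ auxFi y := by
  have h : ∫ _t in (0:ℝ)..y, (1:ℝ) ≤ ∫ t in (0:ℝ)..y, Real.exp (t ^ 2) := by
    apply integral_mono_on hy intervalIntegrable_const (aux_intInt 0 y)
    intro x _
    calc (1:ℝ) = Real.exp 0 := by simp
    _ ≤ Real.exp (x ^ 2) := Real.exp_le_exp.mpr (sq_nonneg x)
  simpa [auxFi] using h

private lemma auxFi_le_self {y : ℝ} (hy : y ≤ 0) : auxFi y ≤ y := by
  have h : ∫ _t in y..(0:ℝ), (1:ℝ) ≤ ∫ t in y..(0:ℝ), Real.exp (t ^ 2) := by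
    apply integral_mono_on hy intervalIntegrable_const (aux_intInt y 0)
    intro x _
    calc (1:ℝ) = Real.exp 0 := by simp
    _ ≤ Real.exp (x ^ 2) := Real.exp_le_exp.mpr (sq_nonneg x)
  have h2 : auxFi 0 - auxFi y = ∫ t in y..(0:ℝ), Real.exp (t ^ 2) := auxFi_sub y 0
  have h0 : auxFi 0 = 0 := by simp [auxFi]
  simp only [intervalIntegral.integral_const, smul_eq_mul, mul_one] at h
  linarith

private lemma auxFi_continuous : Continuous auxFi :=
  intervalIntegral.continuous_primitive (fun a b => aux_intInt a b) 0

private lemma auxFi_surjective : Function.Surjective auxFi := by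
  apply auxFi_continuous.surjective
  · exact Filter.tendsto_atTop_mono' _
      (Filter.eventually_atTop.mpr ⟨0, fun y hy => auxFi_ge_self hy⟩) Filter.tendsto_id
  · exact Filter.tendsto_atBot_mono' _
      (Filter.eventually_atBot.mpr ⟨0, fun y hy => auxFi_le_self hy⟩) Filter.tendsto_id

private lemma aux_scaled_erfi_eq :
    (fun y : ℝ => (Real.sqrt Real.pi / 2) * erfi y) = auxFi := by
  funext y
  have h : Real.sqrt Real.pi ≠ 0 := ne_of_gt (Real.sqrt_pos.mpr Real.pi_pos)
  simp only [erfi, auxFi]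
  field_simp

private lemma auxFi_Phi (x : ℝ) : auxFi (Phi x) = x := by
  have h : Phi = Function.invFun auxFi := by rw [Phi, aux_scaled_erfi_eq]
  rw [h]
  exact Function.rightInverse_invFun auxFi_surjective x

private lemma aux_Phi_mono : Monotone Phi := fun x y hxy =>
  (auxFi_strictMono.le_iff_le).mp (by rw [auxFi_Phi, auxFi_Phi]; exact hxy)

private lemma aux_Phi_zero : Phi 0 = 0 :=
  auxFi_strictMono.injective (by rw [auxFi_Phi]; simp [auxFi])

private lemma aux_Phi_nonneg {x : ℝ} (hx : 0 ≤ x) : 0 ≤ Phi x :=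
  aux_Phi_zero ▸ aux_Phi_mono hx

private lemma aux_Phi_le_self {x : ℝ} (hx : 0 ≤ x) : Phi x ≤ x := by
  have := auxFi_ge_self (aux_Phi_nonneg hx)
  rwa [auxFi_Phi] at this

private lemma aux_phi_pos (x : ℝ) : 0 < phi x := Real.exp_pos _

private lemma aux_phi_le_one (x : ℝ) : phi x ≤ 1 := by
  rw [phi, ← Real.exp_zero]
  exact Real.exp_le_exp.mpr (by nlinarith [sq_nonneg (Phi x)])

private lemma aux_Phi_mul_phi_le_one {x : ℝ} (hx : 0 ≤ x) : Phi x * phi x ≤ 1 := by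
  have h1 : Phi x ≤ Real.exp (Phi x ^ 2) := by
    nlinarith [Real.add_one_le_exp (Phi x ^ 2), sq_nonneg (Phi x - 1)]
  have h2 : phi x * Real.exp (Phi x ^ 2) = 1 := by
    rw [phi, ← Real.exp_add]; simp
  nlinarith [aux_phi_pos x]

private lemma aux_exp_sq_le {y : ℝ} (hy : 0 ≤ y) :
    Real.exp (y ^ 2) ≤ 2 * y * auxFi y + 1 := by
  have hderiv : ∀ t ∈ Set.uIcc (0:ℝ) y, HasDerivAt (fun s => Real.exp (s ^ 2))
      (Real.exp (t ^ 2) * (2 * t)) t := by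
    intro t _
    have h1 : HasDerivAt (fun s : ℝ => s ^ 2) (2 * t) t := by
      simpa using hasDerivAt_pow 2 t
    exact h1.exp
  have hint : IntervalIntegrable (fun t => Real.exp (t ^ 2) * (2 * t)) volume 0 y :=
    (aux_contExpSq.mul (by continuity)).intervalIntegrable 0 y
  have heq : ∫ t in (0:ℝ)..y, Real.exp (t ^ 2) * (2 * t) =
      Real.exp (y ^ 2) - Real.exp (0 ^ 2) :=
    intervalIntegral.integral_eq_sub_of_hasDerivAt hderiv hint
  have hmono : ∫ t in (0:ℝ)..y, Real.exp (t ^ 2) * (2 * t) ≤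
      ∫ t in (0:ℝ)..y, Real.exp (t ^ 2) * (2 * y) := by
    apply integral_mono_on hy hint ((aux_contExpSq.mul continuous_const).intervalIntegrable 0 y)
    intro t ht
    have h1 : t ≤ y := ht.2
    have h2 := (Real.exp_pos (t ^ 2)).le
    show Real.exp (t ^ 2) * (2 * t) ≤ Real.exp (t ^ 2) * (2 * y)
    nlinarith
  have hconst : ∫ t in (0:ℝ)..y, Real.exp (t ^ 2) * (2 * y) = auxFi y * (2 * y) := by
    rw [intervalIntegral.integral_mul_const]; rfl
  rw [heq, hconst] at hmono
  simp only [ne_eq, OfNat.ofNat_ne_zero, not_false_eq_true, zero_pow, Real.exp_zero] at hmono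
  nlinarith

private lemma aux_exp_Phi_sq_le {x : ℝ} (hx : 0 ≤ x) :
    Real.exp (Phi x ^ 2) ≤ 2 * x * Phi x + 1 := by
  have := aux_exp_sq_le (aux_Phi_nonneg hx)
  rw [auxFi_Phi] at this
  linarith

private lemma aux_step_lower {x d : ℝ} (hx : 0 ≤ x) (hd : 0 < d) :
    d * Real.exp (-(Phi (x+d)) ^ 2) ≤ Phi (x+d) - Phi x := by
  set a := Phi x with ha_def
  set b := Phi (x+d) with hb_def
  have hab : a ≤ b := aux_Phi_mono (by linarith)
  have ha : 0 ≤ a := aux_Phi_nonneg hx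
  have hI : ∫ t in a..b, Real.exp (t ^ 2) = d := by
    rw [← auxFi_sub, hb_def, ha_def, auxFi_Phi, auxFi_Phi]; ring
  have hmono : ∫ t in a..b, Real.exp (t ^ 2) ≤ ∫ _t in a..b, Real.exp (b ^ 2) := by
    apply integral_mono_on hab (aux_intInt a b) intervalIntegrable_const
    intro t ht
    exact Real.exp_le_exp.mpr (by nlinarith [ht.1, ht.2])
  rw [hI, intervalIntegral.integral_const, smul_eq_mul] at hmono
  have hprod : Real.exp (-(b ^ 2)) * Real.exp (b ^ 2) = 1 := by
    rw [← Real.exp_add]; simp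
  nlinarith [Real.exp_pos (-(b^2)), Real.exp_pos (b^2)]

private lemma aux_step_upper {x d : ℝ} (hx : 0 ≤ x) (hd : 0 < d) :
    Phi (x+d) - Phi x ≤ d * Real.exp (-(Phi x) ^ 2) := by
  set a := Phi x with ha_def
  set b := Phi (x+d) with hb_def
  have hab : a ≤ b := aux_Phi_mono (by linarith)
  have ha : 0 ≤ a := aux_Phi_nonneg hx
  have hI : ∫ t in a..b, Real.exp (t ^ 2) = d := by
    rw [← auxFi_sub, hb_def, ha_def, auxFi_Phi, auxFi_Phi]; ring
  have hmono : ∫ _t in a..b, Real.exp (a ^ 2) ≤ ∫ t in a..b, Real.exp (t ^ 2) := by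
    apply integral_mono_on hab intervalIntegrable_const (aux_intInt a b)
    intro t ht
    exact Real.exp_le_exp.mpr (by nlinarith [ht.1, ht.2])
  rw [hI, intervalIntegral.integral_const, smul_eq_mul] at hmono
  have hprod : Real.exp (-(a ^ 2)) * Real.exp (a ^ 2) = 1 := by
    rw [← Real.exp_add]; simp
  nlinarith [Real.exp_pos (-(a^2)), Real.exp_pos (a^2)]

private lemma aux_key_step {x d : ℝ} (hx : 0 ≤ x) (hd0 : 0 < d) (hd : d ≤ 1/8) :
    d * (Phi x * phi x) ≤ 4/5 * (Phi (x+d) ^ 2 - Phi x ^ 2) := by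
  have h1 := aux_step_lower hx hd0
  have h2 := aux_step_upper hx hd0
  set a := Phi x with ha_def
  set b := Phi (x+d) with hb_def
  have hab : a ≤ b := aux_Phi_mono (by linarith)
  have ha : 0 ≤ a := aux_Phi_nonneg hx
  have haphi : a * Real.exp (-(a ^ 2)) ≤ 1 := by
    have h := aux_Phi_mul_phi_le_one hx
    rw [phi] at h
    calc a * Real.exp (-(a ^ 2)) = Phi x * Real.exp (-Phi x ^ 2) := by rw [← ha_def]
    _ ≤ 1 := h
  have hexp1 : Real.exp (-(a^2)) ≤ 1 := by
    rw [← Real.exp_zero]; exact Real.exp_le_exp.mpr (by nlinarith [sq_nonneg a])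
  have hba : b - a ≤ d := by nlinarith [Real.exp_pos (-(a^2))]
  have hu1 : b ^ 2 - a ^ 2 ≤ 3 * d := by nlinarith
  have hu0 : 0 ≤ b ^ 2 - a ^ 2 := by nlinarith
  have hge : 1 - (b ^ 2 - a ^ 2) ≤ Real.exp (-(b ^ 2 - a ^ 2)) := by
    nlinarith [Real.add_one_le_exp (-(b ^ 2 - a ^ 2))]
  have h58 : (5/8 : ℝ) ≤ Real.exp (-(b ^ 2 - a ^ 2)) := by linarith
  have hprodu : Real.exp (-(b ^ 2 - a ^ 2)) * Real.exp (b ^ 2 - a ^ 2) = 1 := by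
    rw [← Real.exp_add]; simp
  have hle : Real.exp (b ^ 2 - a ^ 2) ≤ 8/5 := by
    nlinarith [Real.exp_pos (b ^ 2 - a ^ 2)]
  have hsplit : Real.exp (-(a ^ 2)) = Real.exp (b ^ 2 - a ^ 2) * Real.exp (-(b ^ 2)) := by
    rw [← Real.exp_add]; ring_nf
  have hratio : Real.exp (-(a ^ 2)) ≤ (8/5) * Real.exp (-(b ^ 2)) := by
    rw [hsplit]
    exact mul_le_mul_of_nonneg_right hle (Real.exp_pos _).le
  have hphi : phi x = Real.exp (-(a ^ 2)) := by rw [phi, ← ha_def]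
  rw [hphi]
  have e1 : d * (a * Real.exp (-(a^2))) ≤ d * (a * ((8/5) * Real.exp (-(b^2)))) := by
    apply mul_le_mul_of_nonneg_left _ hd0.le
    exact mul_le_mul_of_nonneg_left hratio ha
  have e3 : (8/5) * a * (d * Real.exp (-(b^2))) ≤ (8/5) * a * (b - a) := by
    apply mul_le_mul_of_nonneg_left h1 (by positivity)
  nlinarith [sq_nonneg (b - a)]

private lemma aux_sum_key {d : ℝ} (hd0 : 0 < d) (hd : d ≤ 1/8) (I : ℕ) :
    ∑ j ∈ Finset.range I, d * (Phi (j * d) * phi (j * d)) ≤ 4/5 * Phi (I * d) ^ 2 := by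
  induction I with
  | zero => simp [aux_Phi_zero]
  | succ I ih =>
    rw [Finset.sum_range_succ]
    have hstep := aux_key_step (x := (I:ℝ) * d) (by positivity) hd0 hd
    have hcast : ((I+1 : ℕ) : ℝ) * d = (I:ℝ) * d + d := by push_cast; ring
    rw [hcast]
    nlinarith [hstep, ih]

end
end TF

namespace TF
noncomputable section
open scoped Classical

private lemma aux_exists_N (ε : ℝ) (hε0 : 0 < ε) (C : ℝ) :
    ∃ N : ℕ, ∀ n ≥ N, C ≤ (n : ℝ) ^ ε := by
  have h : Filter.Tendsto (fun n : ℕ => ((n:ℝ)) ^ ε) Filter.atTop Filter.atTop :=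
    (tendsto_rpow_atTop hε0).comp tendsto_natCast_atTop_atTop
  have h2 := h.eventually_ge_atTop C
  rw [Filter.eventually_atTop] at h2
  obtain ⟨N, hN⟩ := h2
  exact ⟨N, fun n hn => hN n hn⟩

private lemma aux_gam_nonneg (ε : ℝ) (n i : ℕ) : 0 ≤ gam n ε i :=
  le_trans (by positivity) (le_max_right _ _)

private lemma aux_n_ne_zero (ε : ℝ) (hε0 : 0 < ε) {n : ℕ} (h800 : (800:ℝ) ≤ (n:ℝ)^ε) :
    (1:ℝ) ≤ (n:ℝ) := by
  have hn0 : n ≠ 0 := by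
    rintro rfl
    rw [Nat.cast_zero, Real.zero_rpow (ne_of_gt hε0)] at h800
    linarith
  exact_mod_cast Nat.one_le_iff_ne_zero.mpr hn0

private lemma aux_m800 (ε : ℝ) {n : ℕ} (h800 : (800:ℝ) ≤ (n:ℝ)^ε) :
    (800:ℕ) ≤ ⌊(n:ℝ)^ε⌋₊ :=
  Nat.le_floor (by exact_mod_cast h800)

private lemma aux_del_pos (ε : ℝ) {n : ℕ} (h800 : (800:ℝ) ≤ (n:ℝ)^ε) :
    0 < del n ε := by
  have hm := aux_m800 ε h800
  have : (0:ℝ) < (⌊(n:ℝ)^ε⌋₊ : ℝ) := by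
    have : 0 < ⌊(n:ℝ)^ε⌋₊ := lt_of_lt_of_le (by norm_num) hm
    exact_mod_cast this
  rw [del]
  positivity

private lemma aux_del_le (ε : ℝ) {n : ℕ} (h800 : (800:ℝ) ≤ (n:ℝ)^ε) :
    del n ε ≤ 1/8 := by
  have hm := aux_m800 ε h800
  have h8 : (8:ℝ) ≤ (⌊(n:ℝ)^ε⌋₊ : ℝ) := by
    have : (8:ℕ) ≤ ⌊(n:ℝ)^ε⌋₊ := le_trans (by norm_num) hm
    exact_mod_cast this
  rw [del]
  apply one_div_le_one_div_of_le (by norm_num) h8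

private lemma aux_gam_le_del (ε : ℝ) (hε0 : 0 < ε) {n : ℕ} (h800 : (800:ℝ) ≤ (n:ℝ)^ε)
    (i : ℕ) : gam n ε i ≤ del n ε := by
  have hd0 := aux_del_pos ε h800
  have hd1 : del n ε ≤ 1 := le_trans (aux_del_le ε h800) (by norm_num)
  have hx : (0:ℝ) ≤ (i:ℝ) * del n ε := by positivity
  apply max_le
  · have h := aux_Phi_mul_phi_le_one hx
    calc del n ε * Phi (↑i * del n ε) * phi (↑i * del n ε)
        = del n ε * (Phi (↑i * del n ε) * phi (↑i * del n ε)) := by ring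
    _ ≤ del n ε * 1 := mul_le_mul_of_nonneg_left h hd0.le
    _ = del n ε := mul_one _
  · have h1 := aux_phi_le_one ((i:ℝ) * del n ε)
    have h2 := aux_phi_pos ((i:ℝ) * del n ε)
    have h3 : phi ((i:ℝ) * del n ε) ^ 2 ≤ 1 := by nlinarith
    have h4 : del n ε ^ 2 ≤ del n ε := by nlinarith
    calc del n ε ^ 2 * phi ((i:ℝ) * del n ε) ^ 2 ≤ del n ε ^ 2 * 1 :=
          mul_le_mul_of_nonneg_left h3 (sq_nonneg _)
    _ = del n ε ^ 2 := mul_one _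
    _ ≤ del n ε := h4

private lemma aux_Mdel (ε : ℝ) {n : ℕ} (h800 : (800:ℝ) ≤ (n:ℝ)^ε) :
    ((⌊(n:ℝ)^ε⌋₊ : ℝ)) * del n ε = 1 := by
  have hm := aux_m800 ε h800
  have hm0 : (⌊(n:ℝ)^ε⌋₊ : ℝ) ≠ 0 := by
    have : 0 < ⌊(n:ℝ)^ε⌋₊ := lt_of_lt_of_le (by norm_num) hm
    positivity
  rw [del]
  field_simp

set_option maxHeartbeats 1000000 in
/-- Part (b) core. -/
private lemma aux_gam_lower (ε : ℝ) (hε0 : 0 < ε) {n : ℕ} (h800 : (800:ℝ) ≤ (n:ℝ)^ε)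
    {i : ℕ} (hi : i ≤ Inat n ε) :
    Real.exp (-2) * (n:ℝ) ^ (-5*ε) ≤ gam n ε i := by
  have hd0 := aux_del_pos ε h800
  have hn1 := aux_n_ne_zero ε hε0 h800
  have hnpos : (0:ℝ) < (n:ℝ) := lt_of_lt_of_le zero_lt_one hn1
  set m := ⌊(n:ℝ)^ε⌋₊ with hm_def
  have hmpos : (0:ℝ) < (m:ℝ) := by
    have : 0 < m := lt_of_lt_of_le (by norm_num) (aux_m800 ε h800)
    exact_mod_cast this
  have hmle : (m:ℝ) ≤ (n:ℝ)^ε := Nat.floor_le (Real.rpow_nonneg (Nat.cast_nonneg n) ε)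
  have hMd : (m:ℝ) * del n ε = 1 := aux_Mdel ε h800
  set x := (i:ℝ) * del n ε with hx_def
  clear_value x
  have hx0 : (0:ℝ) ≤ x := by rw [hx_def]; positivity
  have hile : (i:ℝ) ≤ (m:ℝ)^2 := by
    have : (i:ℕ) ≤ m^2 := hi
    exact_mod_cast this
  have hxm : x ≤ (m:ℝ) := by
    rw [hx_def]
    calc (i:ℝ) * del n ε ≤ (m:ℝ)^2 * del n ε := by
          exact mul_le_mul_of_nonneg_right hile hd0.le
    _ = (m:ℝ) * ((m:ℝ) * del n ε) := by ring
    _ = (m:ℝ) := by rw [hMd, mul_one]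
  have hxd : x * del n ε ≤ 1 := by
    calc x * del n ε ≤ (m:ℝ) * del n ε := mul_le_mul_of_nonneg_right hxm hd0.le
    _ = 1 := hMd
  have hgam : gam n ε i = max (del n ε * Phi x * phi x) (del n ε ^ 2 * phi x ^ 2) := by
    rw [gam, ← hx_def]
  have hcore : Real.exp (-2) * del n ε ^ 2 ≤ gam n ε i := by
    rcases le_or_gt (Phi x) 1 with hc | hc
    · have hphi : Real.exp (-1) ≤ phi x := by
        rw [phi]
        apply Real.exp_le_exp.mpr
        nlinarith [aux_Phi_nonneg hx0]
      have h12 : Real.exp (-1) ^ 2 = Real.exp (-2:ℝ) := by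
        rw [sq, ← Real.exp_add]; norm_num
      have hp2 : Real.exp (-2) ≤ phi x ^ 2 := by
        rw [← h12]
        exact pow_le_pow_left₀ (Real.exp_pos _).le hphi 2
      rw [hgam]
      refine le_trans ?_ (le_max_right _ _)
      nlinarith [sq_nonneg (del n ε)]
    · have hPhi1 : (1:ℝ) ≤ Phi x := hc.le
      have hx1 : (1:ℝ) ≤ x := le_trans hPhi1 (aux_Phi_le_self hx0)
      have hexp3 : Real.exp (Phi x ^ 2) ≤ 3 * x * Phi x := by
        nlinarith [aux_exp_Phi_sq_le hx0]
      have hinv : phi x * Real.exp (Phi x ^ 2) = 1 := by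
        rw [phi, ← Real.exp_add]; simp
      have h3 : 1 ≤ phi x * (3 * x * Phi x) := by
        nlinarith [aux_phi_pos x]
      have hnn : 0 ≤ del n ε * Phi x * phi x := by
        have := aux_phi_pos x
        nlinarith
      have s1 : del n ε ^ 2 ≤ del n ε ^ 2 * (phi x * (3 * x * Phi x)) :=
        le_mul_of_one_le_right (sq_nonneg _) h3
      have s2 : del n ε ^ 2 * (phi x * (3 * x * Phi x)) =
          3 * (del n ε * Phi x * phi x) * (x * del n ε) := by ring
      have s3 : 3 * (del n ε * Phi x * phi x) * (x * del n ε) ≤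
          3 * (del n ε * Phi x * phi x) * 1 :=
        mul_le_mul_of_nonneg_left hxd (by linarith)
      have hmain : del n ε ^ 2 ≤ 3 * (del n ε * Phi x * phi x) := by
        rw [s2] at s1; linarith
      have he2 : Real.exp (-2:ℝ) ≤ 1/3 := by
        have h1 : (3:ℝ) ≤ Real.exp 2 := by nlinarith [Real.add_one_le_exp (2:ℝ)]
        have h2 : Real.exp (-2:ℝ) * Real.exp 2 = 1 := by rw [← Real.exp_add]; norm_num
        nlinarith [Real.exp_pos (-2:ℝ)]
      rw [hgam]
      refine le_trans ?_ (le_max_left _ _)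
      nlinarith [sq_nonneg (del n ε)]
  have hd_ge : (n:ℝ)^(-ε) ≤ del n ε := by
    rw [del, Real.rpow_neg (Nat.cast_nonneg n), one_div]
    exact inv_anti₀ hmpos hmle
  have h2e : (n:ℝ)^(-2*ε) ≤ del n ε ^ 2 := by
    have heq : (n:ℝ)^(-2*ε) = ((n:ℝ)^(-ε))^(2:ℕ) := by
      rw [← Real.rpow_natCast ((n:ℝ)^(-ε)) 2, ← Real.rpow_mul (Nat.cast_nonneg n)]
      ring_nf
    rw [heq]
    exact pow_le_pow_left₀ (Real.rpow_nonneg (Nat.cast_nonneg n) _) hd_ge 2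
  have h52 : (n:ℝ)^(-5*ε) ≤ (n:ℝ)^(-2*ε) :=
    Real.rpow_le_rpow_of_exponent_le hn1 (by linarith)
  calc Real.exp (-2) * (n:ℝ)^(-5*ε) ≤ Real.exp (-2) * del n ε ^ 2 := by
        apply mul_le_mul_of_nonneg_left (le_trans h52 h2e) (Real.exp_pos _).le
  _ ≤ gam n ε i := hcore

private lemma aux_Gam_lower (ε : ℝ) (hε0 : 0 < ε) {n : ℕ} (h800 : (800:ℝ) ≤ (n:ℝ)^ε) :
    ∀ i, (n:ℝ)^(-30*ε) ≤ Gam n ε i := by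
  have hnpos : (0:ℝ) < (n:ℝ) := lt_of_lt_of_le zero_lt_one (aux_n_ne_zero ε hε0 h800)
  intro i
  induction i with
  | zero => exact le_refl _
  | succ i ih =>
    have hpos : 0 < Gam n ε i := lt_of_lt_of_le (Real.rpow_pos_of_pos hnpos _) ih
    have h1 : (1:ℝ) ≤ 1 + 10 * gam n ε i := by
      nlinarith [aux_gam_nonneg ε n i]
    calc (n:ℝ)^(-30*ε) ≤ Gam n ε i := ih
    _ ≤ Gam n ε i * (1 + 10 * gam n ε i) := le_mul_of_one_le_right hpos.le h1
    _ = Gam n ε (i+1) := by rw [Gam]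

private lemma aux_Gam_upper_exp (ε : ℝ) (hε0 : 0 < ε) {n : ℕ} (h800 : (800:ℝ) ≤ (n:ℝ)^ε) :
    ∀ i, Gam n ε i ≤ (n:ℝ)^(-30*ε) * Real.exp (10 * ∑ j ∈ Finset.range i, gam n ε j) := by
  have hnpos : (0:ℝ) < (n:ℝ) := lt_of_lt_of_le zero_lt_one (aux_n_ne_zero ε hε0 h800)
  intro i
  induction i with
  | zero => simp [Gam]
  | succ i ih =>
    have hpos : 0 < Gam n ε i :=
      lt_of_lt_of_le (Real.rpow_pos_of_pos hnpos _) (aux_Gam_lower ε hε0 h800 i)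
    have hg := aux_gam_nonneg ε n i
    have hfac : (0:ℝ) ≤ 1 + 10 * gam n ε i := by linarith
    have hfacle : 1 + 10 * gam n ε i ≤ Real.exp (10 * gam n ε i) := by
      nlinarith [Real.add_one_le_exp (10 * gam n ε i)]
    have hrhs : 0 ≤ (n:ℝ)^(-30*ε) * Real.exp (10 * ∑ j ∈ Finset.range i, gam n ε j) := by
      positivity
    calc Gam n ε (i+1) = Gam n ε i * (1 + 10 * gam n ε i) := by rw [Gam]
    _ ≤ ((n:ℝ)^(-30*ε) * Real.exp (10 * ∑ j ∈ Finset.range i, gam n ε j)) *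
        Real.exp (10 * gam n ε i) := by
        apply mul_le_mul ih hfacle hfac hrhs
    _ = (n:ℝ)^(-30*ε) * Real.exp (10 * ∑ j ∈ Finset.range (i+1), gam n ε j) := by
        rw [mul_assoc, ← Real.exp_add, Finset.sum_range_succ]
        ring_nf

/-- The sum bound. -/
private lemma aux_S_bound (ε : ℝ) (hε0 : 0 < ε) {n : ℕ} (h800 : (800:ℝ) ≤ (n:ℝ)^ε) :
    10 * ∑ j ∈ Finset.range (Inat n ε), gam n ε j ≤ 16 * (ε * Real.log n) + 19 := by
  have hd0 := aux_del_pos ε h800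
  have hd8 := aux_del_le ε h800
  have hn1 := aux_n_ne_zero ε hε0 h800
  have hnpos : (0:ℝ) < (n:ℝ) := lt_of_lt_of_le zero_lt_one hn1
  set m := ⌊(n:ℝ)^ε⌋₊ with hm_def
  have hm800 : (800:ℕ) ≤ m := aux_m800 ε h800
  have hm1 : (1:ℝ) ≤ (m:ℝ) := by
    have : 1 ≤ m := le_trans (by norm_num) hm800
    exact_mod_cast this
  have hmpos : (0:ℝ) < (m:ℝ) := lt_of_lt_of_le zero_lt_one hm1
  have hmle : (m:ℝ) ≤ (n:ℝ)^ε := Nat.floor_le (Real.rpow_nonneg (Nat.cast_nonneg n) ε)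
  have hMd : (m:ℝ) * del n ε = 1 := aux_Mdel ε h800
  -- pointwise bound
  have hpt : ∀ j : ℕ, gam n ε j ≤
      del n ε * (Phi (j * del n ε) * phi (j * del n ε)) + del n ε ^ 2 := by
    intro j
    have hx : (0:ℝ) ≤ (j:ℝ) * del n ε := by positivity
    apply max_le
    · calc del n ε * Phi (↑j * del n ε) * phi (↑j * del n ε)
          = del n ε * (Phi (↑j * del n ε) * phi (↑j * del n ε)) := by ring
      _ ≤ _ := by nlinarith [sq_nonneg (del n ε)]
    · have h1 := aux_phi_le_one ((j:ℝ) * del n ε)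
      have h2 := aux_phi_pos ((j:ℝ) * del n ε)
      have h3 := aux_Phi_nonneg hx
      have h4 : phi ((j:ℝ) * del n ε) ^ 2 ≤ 1 := by nlinarith
      have h5 : del n ε ^ 2 * phi ((j:ℝ) * del n ε) ^ 2 ≤ del n ε ^ 2 := by
        nlinarith [sq_nonneg (del n ε)]
      have h6 : 0 ≤ del n ε * (Phi ((j:ℝ) * del n ε) * phi ((j:ℝ) * del n ε)) :=
        mul_nonneg hd0.le (mul_nonneg h3 h2.le)
      linarith
  have hsum : ∑ j ∈ Finset.range (Inat n ε), gam n ε j ≤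
      (∑ j ∈ Finset.range (Inat n ε), del n ε * (Phi (j * del n ε) * phi (j * del n ε)))
        + (Inat n ε : ℝ) * del n ε ^ 2 := by
    calc ∑ j ∈ Finset.range (Inat n ε), gam n ε j
        ≤ ∑ j ∈ Finset.range (Inat n ε),
          (del n ε * (Phi (j * del n ε) * phi (j * del n ε)) + del n ε ^ 2) :=
        Finset.sum_le_sum (fun j _ => hpt j)
    _ = _ := by rw [Finset.sum_add_distrib, Finset.sum_const, Finset.card_range,
          nsmul_eq_mul]
  have hIdel : ((Inat n ε : ℕ) : ℝ) * del n ε = (m:ℝ) := by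
    have : ((Inat n ε : ℕ) : ℝ) = (m:ℝ)^2 := by
      rw [Inat]; push_cast; ring
    rw [this]
    calc (m:ℝ)^2 * del n ε = (m:ℝ) * ((m:ℝ) * del n ε) := by ring
    _ = (m:ℝ) := by rw [hMd, mul_one]
  have hIdel2 : ((Inat n ε : ℕ) : ℝ) * del n ε ^ 2 ≤ 1 := by
    calc ((Inat n ε : ℕ) : ℝ) * del n ε ^ 2
        = (((Inat n ε : ℕ) : ℝ) * del n ε) * del n ε := by ring
    _ = (m:ℝ) * del n ε := by rw [hIdel]
    _ ≤ 1 := le_of_eq hMd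
  have hT : ∑ j ∈ Finset.range (Inat n ε), del n ε * (Phi (j * del n ε) * phi (j * del n ε))
      ≤ 4/5 * Phi (m:ℝ) ^ 2 := by
    have h := aux_sum_key hd0 hd8 (Inat n ε)
    rwa [hIdel] at h
  -- bound on Phi(m)^2
  have hPhi2 : Phi (m:ℝ) ^ 2 ≤ Real.log 3 + 2 * Real.log m := by
    have hm0 : (0:ℝ) ≤ (m:ℝ) := hmpos.le
    have h1 : Real.exp (Phi (m:ℝ) ^ 2) ≤ 3 * (m:ℝ)^2 := by
      nlinarith [aux_exp_Phi_sq_le hm0, aux_Phi_le_self hm0, aux_Phi_nonneg hm0]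
    have h2 : (3:ℝ) * (m:ℝ)^2 = Real.exp (Real.log 3 + 2 * Real.log m) := by
      rw [Real.exp_add, Real.exp_log (by norm_num : (0:ℝ) < 3),
        show (2:ℝ) * Real.log m = Real.log m + Real.log m from by ring,
        Real.exp_add, Real.exp_log hmpos]
      ring
    rw [h2] at h1
    exact Real.exp_le_exp.mp h1
  have hlogm : Real.log m ≤ ε * Real.log n := by
    calc Real.log m ≤ Real.log ((n:ℝ)^ε) := Real.log_le_log hmpos hmle
    _ = ε * Real.log n := Real.log_rpow hnpos ε
  have hlog3 : Real.log 3 ≤ 9/8 := by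
    rw [Real.log_le_iff_le_exp (by norm_num : (0:ℝ) < 3)]
    have he : Real.exp (9/8:ℝ) = Real.exp 1 * Real.exp (1/8) := by
      rw [← Real.exp_add]; norm_num
    nlinarith [Real.exp_one_gt_d9, Real.add_one_le_exp (1/8:ℝ), Real.exp_pos (1/8:ℝ),
      Real.exp_pos 1]
  nlinarith [hsum, hT, hIdel2, hPhi2, hlogm, hlog3]

/-- Part (c) core. -/
private lemma aux_Gam_bounds (ε : ℝ) (hε0 : 0 < ε) {n : ℕ} (h800 : (800:ℝ) ≤ (n:ℝ)^ε)
    {i : ℕ} (hi : i ≤ Inat n ε) :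
    (n:ℝ)^(-30*ε) ≤ Gam n ε i ∧ Gam n ε i ≤ (n:ℝ)^(-10*ε) := by
  have hn1 := aux_n_ne_zero ε hε0 h800
  have hnpos : (0:ℝ) < (n:ℝ) := lt_of_lt_of_le zero_lt_one hn1
  refine ⟨aux_Gam_lower ε hε0 h800 i, ?_⟩
  have h5 : (5:ℝ) ≤ ε * Real.log n := by
    have hexp5 : Real.exp (5:ℝ) ≤ 800 := by
      have h1 : Real.exp (5:ℝ) = Real.exp 1 ^ (5:ℕ) := by
        rw [Real.exp_one_pow]; norm_num
      have h2 : Real.exp 1 ^ (5:ℕ) ≤ (2.7182818286:ℝ)^(5:ℕ) :=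
        pow_le_pow_left₀ (Real.exp_pos 1).le Real.exp_one_lt_d9.le 5
      have h3 : (2.7182818286:ℝ)^(5:ℕ) ≤ 800 := by norm_num
      linarith
    have h4 : (5:ℝ) ≤ Real.log 800 := by
      rw [Real.le_log_iff_exp_le (by norm_num : (0:ℝ) < 800)]
      exact hexp5
    calc (5:ℝ) ≤ Real.log 800 := h4
    _ ≤ Real.log ((n:ℝ)^ε) := Real.log_le_log (by norm_num) h800
    _ = ε * Real.log n := Real.log_rpow hnpos ε
  have hSsub : ∑ j ∈ Finset.range i, gam n ε j ≤
      ∑ j ∈ Finset.range (Inat n ε), gam n ε j := by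
    apply Finset.sum_le_sum_of_subset_of_nonneg (Finset.range_subset_range.mpr hi)
    intro j _ _
    exact aux_gam_nonneg ε n j
  have hS := aux_S_bound ε hε0 h800
  have h10 : 10 * ∑ j ∈ Finset.range i, gam n ε j ≤ 20 * (ε * Real.log n) := by
    nlinarith
  calc Gam n ε i ≤ (n:ℝ)^(-30*ε) * Real.exp (10 * ∑ j ∈ Finset.range i, gam n ε j) :=
        aux_Gam_upper_exp ε hε0 h800 i
  _ ≤ (n:ℝ)^(-30*ε) * Real.exp (20 * (ε * Real.log n)) := by
      apply mul_le_mul_of_nonneg_left (Real.exp_le_exp.mpr h10)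
        (Real.rpow_pos_of_pos hnpos _).le
  _ = (n:ℝ)^(-30*ε) * (n:ℝ)^(20*ε) := by
      rw [Real.rpow_def_of_pos hnpos (20*ε)]
      ring_nf
  _ = (n:ℝ)^(-10*ε) := by
      rw [← Real.rpow_add hnpos]
      ring_nf

end
end TF

namespace TF
noncomputable section
open scoped Classical

/-- (Fact (ii).) (a) `max_{0 ≤ i ≤ I} γ(i) → 0`;
(b) `γ(i) ≥ c·n^{-5ε}` for some `c > 0`, all large `n` and all `0 ≤ i ≤ I`;
(c) `n^{-30ε} ≤ Γ(i) ≤ n^{-10ε}` for all large `n` and all `0 ≤ i ≤ I`. -/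
theorem fact_gamma_Gamma_bounds
    (ε : ℝ) (hε0 : 0 < ε) (hε1 : ε < 1 / 10 ^ 10) :
    (∀ ξ : ℝ, 0 < ξ → ∃ N : ℕ, ∀ n ≥ N, ∀ i ≤ Inat n ε, |gam n ε i| < ξ) ∧
    (∃ c : ℝ, 0 < c ∧ ∃ N : ℕ, ∀ n ≥ N, ∀ i ≤ Inat n ε,
      c * (n : ℝ) ^ (-5 * ε) ≤ gam n ε i) ∧
    (∃ N : ℕ, ∀ n ≥ N, ∀ i ≤ Inat n ε,
      (n : ℝ) ^ (-30 * ε) ≤ Gam n ε i ∧ Gam n ε i ≤ (n : ℝ) ^ (-10 * ε)) := by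
  obtain ⟨N0, hN0⟩ := aux_exists_N ε hε0 800
  refine ⟨?_, ?_, ?_⟩
  · -- (a)
    intro ξ hξ
    obtain ⟨N1, hN1⟩ := aux_exists_N ε hε0 (800 + (1/ξ + 1))
    refine ⟨N1, fun n hn i _hi => ?_⟩
    have hbig : (800:ℝ) + (1/ξ + 1) ≤ (n:ℝ)^ε := hN1 n hn
    have h800 : (800:ℝ) ≤ (n:ℝ)^ε := by
      have h1 : (0:ℝ) < 1/ξ + 1 := by positivity
      linarith
    have hgle := aux_gam_le_del ε hε0 h800 i
    have hgnn := aux_gam_nonneg ε n i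
    rw [abs_of_nonneg hgnn]
    have hfl : (n:ℝ)^ε < (⌊(n:ℝ)^ε⌋₊ : ℝ) + 1 := Nat.lt_floor_add_one _
    have hminv : 1/ξ < (⌊(n:ℝ)^ε⌋₊ : ℝ) := by linarith
    have hmpos : (0:ℝ) < (⌊(n:ℝ)^ε⌋₊ : ℝ) := lt_trans (by positivity) hminv
    have hdlt : del n ε < ξ := by
      rw [del, div_lt_iff₀ hmpos]
      have h1 : 1/ξ * ξ = 1 := by field_simp
      nlinarith
    linarith
  · -- (b)
    exact ⟨Real.exp (-2), Real.exp_pos _, N0,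
      fun n hn i hi => aux_gam_lower ε hε0 (hN0 n hn) hi⟩
  · -- (c)
    exact ⟨N0, fun n hn i hi => aux_Gam_bounds ε hε0 (hN0 n hn) hi⟩


end
end TF
end

section
/- As x → ∞: (a) √π · x · erfi(x) · exp(−x²) → 1; (b) Φ(x)/√(ln x) → 1; (c) 2x·φ(x)·√(ln x) → 1; consequently (d) 2x·Φ(x)·φ(x) → 1. -/
open MeasureTheory Finset Filter

namespace TF
noncomputable section
open scoped Classical

def Fi (y : ℝ) : ℝ := ∫ t in (0:ℝ)..y, Real.exp (t ^ 2)

lemma cont_exp_sq : Continuous fun t : ℝ => Real.exp (t ^ 2) :=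
  Real.continuous_exp.comp (continuous_pow 2)

lemma sqrt_pi_pos : 0 < Real.sqrt Real.pi := Real.sqrt_pos.mpr Real.pi_pos

lemma halfErfi_eq_Fi : (fun y : ℝ => (Real.sqrt Real.pi / 2) * erfi y) = Fi := by
  funext y
  unfold erfi Fi
  field_simp

lemma Fi_hasDerivAt (y : ℝ) : HasDerivAt Fi (Real.exp (y ^ 2)) y := by
  exact intervalIntegral.integral_hasDerivAt_right
    (cont_exp_sq.intervalIntegrable _ _)
    (cont_exp_sq.stronglyMeasurableAtFilter _ _)
    cont_exp_sq.continuousAt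

lemma Fi_continuous : Continuous Fi :=
  continuous_iff_continuousAt.mpr fun y => (Fi_hasDerivAt y).differentiableAt.continuousAt

lemma Fi_strictMono : StrictMono Fi := by
  apply strictMono_of_deriv_pos
  intro y
  rw [(Fi_hasDerivAt y).deriv]
  positivity

lemma integral_two_mul_exp_sq (a b : ℝ) :
    ∫ t in a..b, 2 * t * Real.exp (t ^ 2) = Real.exp (b ^ 2) - Real.exp (a ^ 2) := by
  apply intervalIntegral.integral_eq_sub_of_hasDerivAt (f := fun t => Real.exp (t ^ 2))
  · intro t _
    have h := ((hasDerivAt_pow 2 t)).exp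
    simpa [mul_comm] using h
  · exact (Continuous.intervalIntegrable (by continuity) _ _)

lemma Fi_ge_self {y : ℝ} (hy : 0 ≤ y) : y ≤ Fi y := by
  have : ∫ t in (0:ℝ)..y, (1:ℝ) ≤ Fi y := by
    apply intervalIntegral.integral_mono_on hy
      (intervalIntegrable_const) (cont_exp_sq.intervalIntegrable _ _)
    intro t _
    exact Real.one_le_exp (by positivity)
  simpa using this

lemma Fi_le_self {y : ℝ} (hy : y ≤ 0) : Fi y ≤ y := by
  have h : ∫ t in y..(0:ℝ), (1:ℝ) ≤ ∫ t in y..(0:ℝ), Real.exp (t ^ 2) := by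
    apply intervalIntegral.integral_mono_on hy
      (intervalIntegrable_const) (cont_exp_sq.intervalIntegrable _ _)
    intro t _
    exact Real.one_le_exp (by positivity)
  have h2 : ∫ t in y..(0:ℝ), Real.exp (t ^ 2) = - Fi y := by
    rw [intervalIntegral.integral_symm]; rfl
  simp only [intervalIntegral.integral_const, smul_eq_mul, mul_one] at h
  rw [h2] at h
  linarith

lemma Fi_surjective : Function.Surjective Fi := by
  apply Fi_continuous.surjective
  · apply tendsto_atTop_mono' _ _ tendsto_id
    filter_upwards [eventually_ge_atTop (0:ℝ)] with y hy
    exact Fi_ge_self hy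
  · apply tendsto_atBot_mono' _ _ tendsto_id
    filter_upwards [eventually_le_atBot (0:ℝ)] with y hy
    exact Fi_le_self hy

lemma Phi_Fi (y : ℝ) : Phi (Fi y) = y := by
  rw [Phi, halfErfi_eq_Fi]
  exact Function.leftInverse_invFun Fi_strictMono.injective y

lemma Fi_Phi (x : ℝ) : Fi (Phi x) = x := by
  rw [Phi, halfErfi_eq_Fi]
  exact Function.rightInverse_invFun Fi_surjective x

lemma Phi_tendsto : Tendsto Phi atTop atTop := by
  apply tendsto_atTop_atTop.mpr
  intro b
  refine ⟨Fi b, fun x hx => ?_⟩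
  have := Fi_strictMono.le_iff_le (a := b) (b := Phi x)
  rw [Fi_Phi] at this
  exact this.mp hx



lemma integrable_tw (a b c : ℝ) :
    IntervalIntegrable (fun t => 2 * t * Real.exp (t ^ 2) / (2 * c)) MeasureTheory.volume a b :=
  (Continuous.intervalIntegrable (by continuity) _ _)

lemma lower_bound {x : ℝ} (hx : 2 ≤ x) :
    1 - Real.exp (1 - 2 * x) ≤ 2 * x * Fi x * Real.exp (-x ^ 2) := by
  have hx0 : (0:ℝ) < x := by linarith
  have hsplit : (∫ t in (0:ℝ)..(x-1), Real.exp (t ^ 2)) + ∫ t in (x-1)..x, Real.exp (t ^ 2)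
      = Fi x := intervalIntegral.integral_add_adjacent_intervals
    (cont_exp_sq.intervalIntegrable _ _) (cont_exp_sq.intervalIntegrable _ _)
  have h1 : (0:ℝ) ≤ ∫ t in (0:ℝ)..(x-1), Real.exp (t ^ 2) :=
    intervalIntegral.integral_nonneg (by linarith) (fun t _ => (Real.exp_pos _).le)
  have h2 : ∫ t in (x-1)..x, 2 * t * Real.exp (t ^ 2) / (2 * x)
      ≤ ∫ t in (x-1)..x, Real.exp (t ^ 2) := by
    apply intervalIntegral.integral_mono_on (by linarith) (integrable_tw _ _ _)
      (cont_exp_sq.intervalIntegrable _ _)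
    intro t ht
    rw [div_le_iff₀ (by linarith)]
    have ht1 : (1:ℝ) ≤ t := by have := ht.1; linarith
    nlinarith [Real.exp_pos (t ^ 2), ht.2]
  rw [intervalIntegral.integral_div, integral_two_mul_exp_sq] at h2
  have hFi : (Real.exp (x ^ 2) - Real.exp ((x-1) ^ 2)) / (2 * x) ≤ Fi x := by
    rw [← hsplit]; linarith
  have h1' : Real.exp (x ^ 2) - Real.exp ((x-1) ^ 2) ≤ Fi x * (2 * x) :=
    (div_le_iff₀ (by linarith)).mp hFi
  have e1 : Real.exp (x ^ 2) * Real.exp (-x ^ 2) = 1 := by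
    rw [← Real.exp_add]; simp
  have e2 : Real.exp ((x-1) ^ 2) * Real.exp (-x ^ 2) = Real.exp (1 - 2 * x) := by
    rw [← Real.exp_add]; ring_nf
  calc 1 - Real.exp (1 - 2 * x)
      = (Real.exp (x ^ 2) - Real.exp ((x-1) ^ 2)) * Real.exp (-x ^ 2) := by
        rw [sub_mul, e1, e2]
    _ ≤ Fi x * (2 * x) * Real.exp (-x ^ 2) :=
        mul_le_mul_of_nonneg_right h1' (Real.exp_pos _).le
    _ = 2 * x * Fi x * Real.exp (-x ^ 2) := by ring

lemma upper_bound {x : ℝ} (hx : 2 ≤ x) :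
    2 * x * Fi x * Real.exp (-x ^ 2)
      ≤ 2 * x * (x - 1) * Real.exp (1 - 2 * x) + x / (x - 1) := by
  have hx1 : (1:ℝ) ≤ x - 1 := by linarith
  have hx0 : (0:ℝ) < x := by linarith
  have hsplit : (∫ t in (0:ℝ)..(x-1), Real.exp (t ^ 2)) + ∫ t in (x-1)..x, Real.exp (t ^ 2)
      = Fi x := intervalIntegral.integral_add_adjacent_intervals
    (cont_exp_sq.intervalIntegrable _ _) (cont_exp_sq.intervalIntegrable _ _)
  have h1 : ∫ t in (0:ℝ)..(x-1), Real.exp (t ^ 2) ≤ (x - 1) * Real.exp ((x-1) ^ 2) := by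
    have := intervalIntegral.integral_mono_on (a := 0) (b := x-1) (by linarith)
      (cont_exp_sq.intervalIntegrable _ _) (intervalIntegrable_const (μ := MeasureTheory.volume) (c := Real.exp ((x-1)^2)))
      (fun t ht => Real.exp_le_exp.mpr (by nlinarith [ht.1, ht.2]))
    simpa using this
  have h2 : ∫ t in (x-1)..x, Real.exp (t ^ 2)
      ≤ ∫ t in (x-1)..x, 2 * t * Real.exp (t ^ 2) / (2 * (x - 1)) := by
    apply intervalIntegral.integral_mono_on (by linarith)
      (cont_exp_sq.intervalIntegrable _ _) (integrable_tw _ _ _)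
    intro t ht
    rw [le_div_iff₀ (by linarith)]
    nlinarith [Real.exp_pos (t ^ 2), ht.1]
  rw [intervalIntegral.integral_div, integral_two_mul_exp_sq] at h2
  have h3 : (Real.exp (x ^ 2) - Real.exp ((x-1) ^ 2)) / (2 * (x - 1))
      ≤ Real.exp (x ^ 2) / (2 * (x - 1)) :=
    (div_le_div_iff_of_pos_right (by linarith)).mpr (by linarith [Real.exp_pos ((x-1) ^ 2)])
  have hFi : Fi x ≤ (x - 1) * Real.exp ((x-1) ^ 2) + Real.exp (x ^ 2) / (2 * (x - 1)) := by
    rw [← hsplit]; linarith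
  have e1 : Real.exp (x ^ 2) * Real.exp (-x ^ 2) = 1 := by
    rw [← Real.exp_add]; simp
  have e2 : Real.exp ((x-1) ^ 2) * Real.exp (-x ^ 2) = Real.exp (1 - 2 * x) := by
    rw [← Real.exp_add]; ring_nf
  calc 2 * x * Fi x * Real.exp (-x ^ 2)
      ≤ 2 * x * ((x - 1) * Real.exp ((x-1) ^ 2) + Real.exp (x ^ 2) / (2 * (x - 1)))
          * Real.exp (-x ^ 2) := by
        exact mul_le_mul_of_nonneg_right
          (mul_le_mul_of_nonneg_left hFi (by linarith)) (Real.exp_pos _).le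
    _ = 2 * x * (x - 1) * (Real.exp ((x-1) ^ 2) * Real.exp (-x ^ 2))
        + (x / (x - 1)) * (Real.exp (x ^ 2) * Real.exp (-x ^ 2)) := by
        field_simp
    _ = 2 * x * (x - 1) * Real.exp (1 - 2 * x) + x / (x - 1) := by
        rw [e1, e2]; ring



lemma tendsto_linear_atBot : Tendsto (fun x : ℝ => 1 - 2 * x) atTop atBot := by
  have h : Tendsto (fun x : ℝ => 1 + (-2) * x) atTop atBot :=
    tendsto_atBot_add_const_left _ 1 ((tendsto_id).const_mul_atTop_of_neg (by norm_num))
  exact h.congr (by intro x; ring)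

lemma tendsto_exp_lin : Tendsto (fun x : ℝ => Real.exp (1 - 2 * x)) atTop (nhds 0) :=
  Real.tendsto_exp_atBot.comp tendsto_linear_atBot

lemma tendsto_lower : Tendsto (fun x : ℝ => 1 - Real.exp (1 - 2 * x)) atTop (nhds 1) := by
  have := tendsto_const_nhds (x := (1:ℝ)) (f := atTop) |>.sub tendsto_exp_lin
  simpa using this

lemma tendsto_poly_exp : Tendsto (fun x : ℝ => 2 * x * (x - 1) * Real.exp (1 - 2 * x))
    atTop (nhds 0) := by
  have hb : Tendsto (fun x : ℝ => 2 * Real.exp 1 * (x ^ 2 * Real.exp (-x))) atTop (nhds 0) := by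
    have := (Real.tendsto_pow_mul_exp_neg_atTop_nhds_zero 2).const_mul (2 * Real.exp 1)
    simpa using this
  apply tendsto_of_tendsto_of_tendsto_of_le_of_le' tendsto_const_nhds hb
  · filter_upwards [eventually_ge_atTop (2:ℝ)] with x hx
    have : (0:ℝ) ≤ 2 * x * (x - 1) := by nlinarith
    positivity
  · filter_upwards [eventually_ge_atTop (2:ℝ)] with x hx
    have h1 : Real.exp (1 - 2 * x) = Real.exp 1 * Real.exp (-x) * Real.exp (-x) := by
      rw [← Real.exp_add, ← Real.exp_add]; ring_nf
    have h2 : Real.exp (-x) ≤ 1 := Real.exp_le_one_iff.mpr (by linarith)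
    have h3 : 2 * x * (x - 1) ≤ 2 * x ^ 2 := by nlinarith
    have h4 : (0:ℝ) < Real.exp (-x) := Real.exp_pos _
    calc 2 * x * (x - 1) * Real.exp (1 - 2 * x)
        = (2 * x * (x - 1)) * (Real.exp 1 * Real.exp (-x) * Real.exp (-x)) := by rw [h1]
      _ ≤ (2 * x ^ 2) * (Real.exp 1 * Real.exp (-x) * 1) := by
          apply mul_le_mul h3 ?_ (by positivity) (by nlinarith)
          apply mul_le_mul_of_nonneg_left h2 (by positivity)
      _ = 2 * Real.exp 1 * (x ^ 2 * Real.exp (-x)) := by ring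

lemma tendsto_ratio : Tendsto (fun x : ℝ => x / (x - 1)) atTop (nhds 1) := by
  have h : Tendsto (fun x : ℝ => 1 + (x - 1)⁻¹) atTop (nhds 1) := by
    have := (tendsto_atTop_add_const_right atTop (-1) (tendsto_id (α := ℝ))).inv_tendsto_atTop
    simpa [sub_eq_add_neg] using tendsto_const_nhds (x := (1:ℝ)) (f := atTop) |>.add this
  apply h.congr'
  filter_upwards [eventually_ge_atTop (2:ℝ)] with x hx
  have hx1 : x - 1 ≠ 0 := by linarith
  field_simp
  ring

lemma tendsto_upper : Tendsto (fun x : ℝ => 2 * x * (x - 1) * Real.exp (1 - 2 * x) + x / (x - 1))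
    atTop (nhds 1) := by
  simpa using tendsto_poly_exp.add tendsto_ratio

lemma g_tendsto : Tendsto (fun x : ℝ => 2 * x * Fi x * Real.exp (-x ^ 2)) atTop (nhds 1) := by
  apply tendsto_of_tendsto_of_tendsto_of_le_of_le' tendsto_lower tendsto_upper
  · filter_upwards [eventually_ge_atTop (2:ℝ)] with x hx using lower_bound hx
  · filter_upwards [eventually_ge_atTop (2:ℝ)] with x hx using upper_bound hx



lemma tendsto_log_gy : Tendsto (fun y : ℝ => Real.log (2 * y * Fi y * Real.exp (-y ^ 2)))
    atTop (nhds 0) := by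
  have := (Real.continuousAt_log one_ne_zero).tendsto.comp g_tendsto
  simpa [Function.comp_def] using this

lemma tendsto_log_div_sq : Tendsto (fun y : ℝ => Real.log y / y ^ 2) atTop (nhds 0) := by
  have h1 := Real.isLittleO_log_id_atTop.tendsto_div_nhds_zero
  have h2 : Tendsto (fun y : ℝ => y⁻¹) atTop (nhds 0) := tendsto_inv_atTop_zero
  have h := h1.mul h2
  rw [mul_zero] at h
  apply h.congr
  intro y
  simp only [id]
  rw [← div_eq_mul_inv, div_div, ← pow_two]

lemma hlogFi : Tendsto (fun y : ℝ => Real.log (Fi y) / y ^ 2) atTop (nhds 1) := by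
  have T1 : Tendsto (fun y : ℝ => Real.log (2 * y * Fi y * Real.exp (-y ^ 2)) / y ^ 2)
      atTop (nhds 0) := tendsto_log_gy.div_atTop (tendsto_pow_atTop two_ne_zero)
  have T2 : Tendsto (fun y : ℝ => Real.log 2 / y ^ 2) atTop (nhds 0) :=
    tendsto_const_nhds.div_atTop (tendsto_pow_atTop two_ne_zero)
  have T : Tendsto (fun y : ℝ => Real.log (2 * y * Fi y * Real.exp (-y ^ 2)) / y ^ 2
      - Real.log 2 / y ^ 2 - Real.log y / y ^ 2 + 1) atTop (nhds 1) := by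
    have := ((T1.sub T2).sub tendsto_log_div_sq).add (tendsto_const_nhds (x := (1:ℝ)))
    simpa using this
  apply T.congr'
  filter_upwards [eventually_ge_atTop (2:ℝ)] with y hy
  have hy0 : (0:ℝ) < y := by linarith
  have hFi : (0:ℝ) < Fi y := lt_of_lt_of_le hy0 (Fi_ge_self hy0.le)
  have hlog : Real.log (2 * y * Fi y * Real.exp (-y ^ 2))
      = Real.log 2 + Real.log y + Real.log (Fi y) + (-y ^ 2) := by
    rw [Real.log_mul (by positivity) (Real.exp_ne_zero _),
      Real.log_mul (by positivity) (ne_of_gt hFi),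
      Real.log_mul two_ne_zero (ne_of_gt hy0), Real.log_exp]
  rw [hlog]
  have hy2 : y ^ 2 ≠ 0 := by positivity
  field_simp
  ring

lemma hYB : Tendsto (fun y : ℝ => y / Real.sqrt (Real.log (Fi y))) atTop (nhds 1) := by
  have h := (hlogFi.sqrt).inv₀ (by norm_num)
  rw [Real.sqrt_one, inv_one] at h
  apply h.congr'
  filter_upwards [eventually_ge_atTop (2:ℝ)] with y hy
  have hy0 : (0:ℝ) < y := by linarith
  have hL : (0:ℝ) ≤ Real.log (Fi y) :=
    Real.log_nonneg (le_trans (by linarith) (Fi_ge_self hy0.le))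
  rw [Real.sqrt_div hL, Real.sqrt_sq hy0.le, inv_div]


/-- As `x → ∞`: `√π·x·erfi(x)·exp(-x²) → 1`,
`Φ(x)/√(ln x) → 1`, `2x·φ(x)·√(ln x) → 1` and `2x·Φ(x)·φ(x) → 1`. -/
theorem erfi_Phi_asymptotics :
    Tendsto (fun x : ℝ => Real.sqrt Real.pi * x * erfi x * Real.exp (-x ^ 2))
      atTop (nhds 1) ∧
    Tendsto (fun x : ℝ => Phi x / Real.sqrt (Real.log x)) atTop (nhds 1) ∧
    Tendsto (fun x : ℝ => 2 * x * phi x * Real.sqrt (Real.log x)) atTop (nhds 1) ∧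
    Tendsto (fun x : ℝ => 2 * x * Phi x * phi x) atTop (nhds 1) := by
  have ha : Tendsto (fun x : ℝ => Real.sqrt Real.pi * x * erfi x * Real.exp (-x ^ 2))
      atTop (nhds 1) := by
    apply g_tendsto.congr
    intro x
    rw [erfi, show (∫ t in (0:ℝ)..x, Real.exp (t ^ 2)) = Fi x from rfl]
    have := sqrt_pi_pos.ne'
    field_simp
  have hb : Tendsto (fun x : ℝ => Phi x / Real.sqrt (Real.log x)) atTop (nhds 1) := by
    have h := hYB.comp Phi_tendsto
    apply h.congr
    intro x
    simp only [Function.comp_apply, Fi_Phi]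
  have hd : Tendsto (fun x : ℝ => 2 * x * Phi x * phi x) atTop (nhds 1) := by
    have h := g_tendsto.comp Phi_tendsto
    apply h.congr
    intro x
    simp only [Function.comp_apply, Fi_Phi, phi]
    ring
  have hc : Tendsto (fun x : ℝ => 2 * x * phi x * Real.sqrt (Real.log x)) atTop (nhds 1) := by
    have h := hd.mul (hb.inv₀ one_ne_zero)
    norm_num at h
    apply h.congr'
    filter_upwards [Phi_tendsto.eventually_ge_atTop 1] with x hx
    have hΦ : Phi x ≠ 0 := by linarith
    field_simp
  exact ⟨ha, hb, hc, hd⟩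



end
end TF
end
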